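/- arXiv:2604.24165 — 2 statements merged into one kernel-verified Lean document; each statement's English description precedes it below -/
import Mathlib

section
/- Let n ≥ 3 be odd and set a := log(1 + √2). Then the multiset of complex roots (with multiplicity) of the permanental polynomial π(C_n, x) of the cycle C_n equals { 2·sinh((a + 2πik)/n) : k = 0, 1, …, n−1 }, where sinh is the complex hyperbolic sine and i is the imaginary unit. -/
open Polynomial Matrix

/-- The permanental polynomial `per(x·I − A)` of a square matrix `A`. -/
noncomputable def permPoly {n : ℕ} {R : Type*} [CommRing R] (A : Matrix (Fin n) (Fin n) R) :
    Polynomial R :=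
  ((Polynomial.X : R[X]) • (1 : Matrix (Fin n) (Fin n) R[X]) - A.map Polynomial.C).permanent

/-- The permanental polynomial `π(G,x) = per(x·I − A(G))` of a graph, over `ℂ`. -/
noncomputable def graphPermPoly {n : ℕ} (G : SimpleGraph (Fin n)) : Polynomial ℂ :=
  letI := Classical.decRel G.Adj
  permPoly (G.adjMatrix ℂ)

/-- The permanental energy `E_per(G)`: the sum of the moduli of the roots (with
multiplicity) of the permanental polynomial of `G`. -/
noncomputable def perEnergy {n : ℕ} (G : SimpleGraph (Fin n)) : ℝ :=
  ((graphPermPoly G).roots.map (fun z : ℂ => ‖z‖)).sum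


open Equiv Finset Complex
open Fin.NatCast Fin.CommRing

theorem Equiv.Perm.apply_inv_self {α : Type*} (f : Equiv.Perm α) (x : α) : f (f⁻¹ x) = x :=
  f.apply_symm_apply x

theorem Equiv.Perm.inv_apply_self {α : Type*} (f : Equiv.Perm α) (x : α) : f⁻¹ (f x) = x :=
  f.symm_apply_apply x

section Aux
variable {n : ℕ} [NeZero n]


lemma fin_one_ne_zero (hn : 3 ≤ n) : (1 : Fin n) ≠ 0 := by
  simp [Fin.ext_iff, Fin.val_one']; omega

lemma fin_two_ne_zero (hn : 3 ≤ n) : (2 : Fin n) ≠ 0 := by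
  have h : ((2:ℕ) : Fin n) = (2 : Fin n) := by norm_cast
  have h2 : (((2:ℕ) : Fin n) : ℕ) = 2 := Fin.val_cast_of_lt (by omega)
  rw [h] at h2
  intro hc; rw [hc] at h2; simp at h2

lemma fin_add_one_ne (hn : 3 ≤ n) (i : Fin n) : i + 1 ≠ i := by
  intro h
  have : i + 1 = i + 0 := by simpa using h
  exact fin_one_ne_zero hn (add_left_cancel this)

lemma fin_sub_one_ne (hn : 3 ≤ n) (i : Fin n) : i - 1 ≠ i := by
  intro h
  have : i - 1 + 1 = i + 1 := by rw [h]
  rw [sub_add_cancel] at this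
  exact fin_add_one_ne hn i this.symm

lemma fin_add_one_ne_sub_one (hn : 3 ≤ n) (i : Fin n) : i + 1 ≠ i - 1 := by
  intro h
  apply fin_two_ne_zero hn
  have : i + 1 - (i - 1) = 2 := by ring
  rw [h] at this; rw [← this]; ring



def IsGood {n : ℕ} [NeZero n] (σ : Equiv.Perm (Fin n)) : Prop :=
  ∀ i, σ i = i ∨ σ i = i + 1 ∨ σ i = i - 1


lemma shift_up (hn : 3 ≤ n) (σ : Equiv.Perm (Fin n)) (hg : IsGood σ)
    (i : Fin n) (h1 : σ i = i + 1) (h2 : σ (i + 1) ≠ i) :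
    ∀ x, σ x = x + 1 := by
  have key : ∀ j : ℕ, σ (i + (j : Fin n)) = (i + (j : Fin n)) + 1 ∧
      σ ((i + (j : Fin n)) + 1) ≠ i + (j : Fin n) := by
    intro j
    induction j with
    | zero => simpa using ⟨h1, h2⟩
    | succ j ih =>
      obtain ⟨ha, hb⟩ := ih
      have hcast : ((j+1 : ℕ) : Fin n) = (j : Fin n) + 1 := by push_cast; ring
      rw [hcast, ← add_assoc]
      set z := i + (j : Fin n) with hz
      have hstep : σ (z + 1) = z + 1 + 1 := by
        rcases hg (z + 1) with h | h | h
        · exfalso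
          have heq : σ (z + 1) = σ z := by rw [h, ha]
          exact fin_add_one_ne hn z (σ.injective heq)
        · exact h
        · exfalso
          apply hb
          rw [h, add_sub_cancel_right]
      refine ⟨hstep, ?_⟩
      intro hc
      have heq : σ (z + 1 + 1) = σ z := by rw [hc, ha]
      have h4 := σ.injective heq
      apply fin_two_ne_zero hn
      have : z + 1 + 1 - z = 2 := by ring
      rw [← this, h4]; ring
  intro x
  have hsur : x = i + (((x - i) : Fin n).val : Fin n) := by
    rw [Fin.cast_val_eq_self, add_sub_cancel]
  rw [hsur]
  exact (key ((x - i).val)).1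

lemma good_inv (σ : Equiv.Perm (Fin n)) (hg : IsGood σ) : IsGood σ⁻¹ := by
  intro j
  have hj : σ (σ⁻¹ j) = j := Equiv.Perm.apply_inv_self σ j
  rcases hg (σ⁻¹ j) with h | h | h
  · left; exact (hj.symm.trans h).symm
  · have e : j = σ⁻¹ j + 1 := hj.symm.trans h
    right; right; rw [eq_sub_iff_add_eq]; exact e.symm
  · have e : j = σ⁻¹ j - 1 := hj.symm.trans h
    right; left; exact sub_eq_iff_eq_add.mp e.symm

lemma struct (hn : 3 ≤ n) (σ : Equiv.Perm (Fin n)) (hg : IsGood σ) :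
    (∀ i, σ (σ i) = i) ∨ (∀ x, σ x = x + 1) ∨ (∀ x, σ x = x - 1) := by
  by_cases hA : ∃ i, σ i = i + 1 ∧ σ (i + 1) ≠ i
  · obtain ⟨i, h1, h2⟩ := hA
    exact Or.inr (Or.inl (shift_up hn σ hg i h1 h2))
  by_cases hB : ∃ i, σ i = i - 1 ∧ σ (i - 1) ≠ i
  · obtain ⟨i, h1, h2⟩ := hB
    right; right
    have hup : ∀ x, σ⁻¹ x = x + 1 := by
      apply shift_up hn σ⁻¹ (good_inv σ hg) (i - 1)
      · rw [sub_add_cancel, ← h1, Equiv.Perm.inv_apply_self]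
      · rw [sub_add_cancel]
        intro hc
        apply h2
        have h3 : σ (i - 1) = σ (σ⁻¹ i) := by rw [hc]
        rwa [Equiv.Perm.apply_inv_self] at h3
    intro x
    have := hup (σ x)
    rw [Equiv.Perm.inv_apply_self] at this
    conv_rhs => rw [this]
    rw [add_sub_cancel_right]
  push_neg at hA hB
  left
  intro i
  rcases hg i with h | h | h
  · rw [h, h]
  · rw [h, hA i h]
  · rw [h, hB i h]




lemma fin_two_step_ne (hn : 3 ≤ n) (i : Fin n) : i + 1 + 1 ≠ i := by
  intro h
  apply fin_two_ne_zero hn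
  have : i + 1 + 1 - i = 2 := by ring
  rw [h] at this; rw [← this]; ring

lemma sign_good_involution (hn : 3 ≤ n) :
    ∀ k : ℕ, ∀ σ : Equiv.Perm (Fin n), IsGood σ → (∀ i, σ (σ i) = i) →
      (univ.filter (fun i => σ i = i + 1)).card = k →
      Equiv.Perm.sign σ = (-1) ^ k := by
  intro k
  induction k using Nat.strong_induction_on with
  | _ k ih =>
    intro σ hg hinv hcard
    rcases Nat.eq_zero_or_pos k with hk | hk
    · subst hk
      have hP : univ.filter (fun i => σ i = i + 1) = ∅ := Finset.card_eq_zero.mp hcard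
      have hid : σ = 1 := by
        apply Equiv.ext; intro i
        simp only [Equiv.Perm.coe_one, id_eq]
        rcases hg i with h | h | h
        · exact h
        · exfalso
          have hm : i ∈ univ.filter (fun i => σ i = i + 1) := by simp [h]
          rw [hP] at hm; simp at hm
        · exfalso
          have h2 : σ (i - 1) = i := by
            have := hinv i; rwa [h] at this
          have h3 : σ (i - 1) = (i - 1) + 1 := by rw [h2, sub_add_cancel]
          have hm : (i - 1) ∈ univ.filter (fun i => σ i = i + 1) := by simp [h3]
          rw [hP] at hm; simp at hm
      rw [hid]; simp
    · have hPne : (univ.filter (fun i => σ i = i + 1)).Nonempty := by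
        rw [← Finset.card_pos, hcard]; exact hk
      obtain ⟨i, hi⟩ := hPne
      have hσi : σ i = i + 1 := by simpa using hi
      have hσi1 : σ (i + 1) = i := by have := hinv i; rwa [hσi] at this
      set σ' := σ * Equiv.swap i (i + 1) with hσ'
      have hne : i ≠ i + 1 := fun h => fin_add_one_ne hn i h.symm
      have h'i : σ' i = i := by
        rw [hσ', Equiv.Perm.mul_apply, Equiv.swap_apply_left, hσi1]
      have h'i1 : σ' (i + 1) = i + 1 := by
        rw [hσ', Equiv.Perm.mul_apply, Equiv.swap_apply_right, hσi]
      have h'other : ∀ j, j ≠ i → j ≠ i + 1 → σ' j = σ j := by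
        intro j hj1 hj2
        rw [hσ', Equiv.Perm.mul_apply, Equiv.swap_apply_of_ne_of_ne hj1 hj2]
      have hgood' : IsGood σ' := by
        intro j
        by_cases hj1 : j = i
        · left; rw [hj1, h'i]
        by_cases hj2 : j = i + 1
        · left; rw [hj2, h'i1]
        rw [h'other j hj1 hj2]; exact hg j
      have hinv' : ∀ j, σ' (σ' j) = j := by
        intro j
        by_cases hj1 : j = i
        · rw [hj1, h'i, h'i]
        by_cases hj2 : j = i + 1
        · rw [hj2, h'i1, h'i1]
        rw [h'other j hj1 hj2]
        have hs1 : σ j ≠ i := by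
          intro h; apply hj2; rw [← hinv j, h, hσi]
        have hs2 : σ j ≠ i + 1 := by
          intro h; apply hj1; rw [← hinv j, h, hσi1]
        rw [h'other _ hs1 hs2]; exact hinv j
      have hP' : univ.filter (fun j => σ' j = j + 1) =
          (univ.filter (fun j => σ j = j + 1)).erase i := by
        ext j
        simp only [Finset.mem_filter, Finset.mem_univ, true_and, Finset.mem_erase]
        by_cases hj1 : j = i
        · subst hj1
          simp only [h'i]
          constructor
          · intro h; exact absurd h.symm (fin_add_one_ne hn j)
          · rintro ⟨h, -⟩; exact absurd rfl h
        by_cases hj2 : j = i + 1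
        · subst hj2
          simp only [h'i1]
          constructor
          · intro h; exact absurd h.symm (fin_add_one_ne hn (i+1))
          · rintro ⟨-, h⟩
            rw [hσi1] at h
            exact absurd h.symm (fin_two_step_ne hn i)
        · rw [h'other j hj1 hj2]
          exact ⟨fun h => ⟨hj1, h⟩, fun h => h.2⟩
      have hcard' : (univ.filter (fun j => σ' j = j + 1)).card = k - 1 := by
        rw [hP', Finset.card_erase_of_mem hi, hcard]
      have hsign' : Equiv.Perm.sign σ' = (-1) ^ (k - 1) :=
        ih (k - 1) (by omega) σ' hgood' hinv' hcard'
      have hs : Equiv.Perm.sign σ' = Equiv.Perm.sign σ * (-1) := by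
        rw [hσ', _root_.map_mul, Equiv.Perm.sign_swap hne]
      rw [hs] at hsign'
      have : Equiv.Perm.sign σ = (-1) ^ (k - 1) * (-1) := by
        rw [← hsign']; simp
      rw [this, ← pow_succ]
      congr 1; omega






/-- adjacency of the cycle graph, for `3 ≤ n` -/
lemma cycle_adj_iff (hn : 3 ≤ n) (u v : Fin n) :
    (SimpleGraph.cycleGraph n).Adj u v ↔ (u = v + 1 ∨ v = u + 1) := by
  rw [SimpleGraph.cycleGraph_adj']
  have h1 : ((1 : Fin n) : ℕ) = 1 := by
    rw [Fin.val_one']; exact Nat.mod_eq_of_lt (by omega)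
  constructor
  · rintro (h | h)
    · left
      have h2 : u - v = 1 := by rw [Fin.ext_iff, h1]; exact h
      rw [sub_eq_iff_eq_add] at h2; rw [h2, add_comm]
    · right
      have h2 : v - u = 1 := by rw [Fin.ext_iff, h1]; exact h
      rw [sub_eq_iff_eq_add] at h2; rw [h2, add_comm]
  · rintro (h | h)
    · left; rw [show u - v = 1 by rw [h, add_sub_cancel_left], h1]
    · right; rw [show v - u = 1 by rw [h, add_sub_cancel_left], h1]

def cycB (n : ℕ) [NeZero n] (c d : ℂ) : Matrix (Fin n) (Fin n) ℂ :=
  Matrix.of fun j k => (if k = j + 1 then c else 0) + (if j = k + 1 then d else 0)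

lemma sign_addRight_one (hn : 3 ≤ n) (hodd : Odd n) :
    Equiv.Perm.sign (Equiv.addRight (1 : Fin n)) = 1 := by
  obtain ⟨m, rfl⟩ : ∃ m, n = m + 1 := ⟨n - 1, by omega⟩
  have h : (Equiv.addRight (1 : Fin (m+1))) = finRotate (m + 1) := by
    apply Equiv.ext; intro x; simp
  rw [h, sign_finRotate]
  have hm : Even m := by
    rcases hodd with ⟨t, ht⟩; exact ⟨t, by omega⟩
  exact Even.neg_one_pow hm

section main

lemma per_eq_det (hn : 3 ≤ n) (hodd : Odd n) (hcd : c * d = -1) (hsum : c ^ n + d ^ n = 2)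
    (A : Matrix (Fin n) (Fin n) ℂ)
    (hA : ∀ i j, A i j = if (SimpleGraph.cycleGraph n).Adj i j then 1 else 0) :
    permanent ((X : ℂ[X]) • (1 : Matrix (Fin n) (Fin n) ℂ[X]) - A.map C) =
      det ((X : ℂ[X]) • (1 : Matrix (Fin n) (Fin n) ℂ[X]) - (cycB n c d).map C) := by
  set M : Matrix (Fin n) (Fin n) ℂ[X] :=
    (X : ℂ[X]) • (1 : Matrix (Fin n) (Fin n) ℂ[X]) - A.map C with hM
  set N : Matrix (Fin n) (Fin n) ℂ[X] :=
    (X : ℂ[X]) • (1 : Matrix (Fin n) (Fin n) ℂ[X]) - (cycB n c d).map C with hN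
  -- entry values
  have hMe : ∀ j i : Fin n, M j i =
      (if j = i then (X : ℂ[X]) else 0) - (if j = i + 1 ∨ i = j + 1 then 1 else 0) := by
    intro j i
    rw [hM]
    simp only [Matrix.sub_apply, Matrix.smul_apply, Matrix.one_apply, Matrix.map_apply,
      hA, cycle_adj_iff hn, apply_ite C, _root_.map_one, _root_.map_zero, smul_eq_mul, mul_ite, mul_one,
      mul_zero]
  have hNe : ∀ j i : Fin n, N j i =
      (if j = i then (X : ℂ[X]) else 0) -
        ((if i = j + 1 then C c else 0) + (if j = i + 1 then C d else 0)) := by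
    intro j i
    rw [hN]
    simp only [Matrix.sub_apply, Matrix.smul_apply, Matrix.one_apply, Matrix.map_apply,
      cycB, Matrix.of_apply, _root_.map_add, apply_ite C, _root_.map_zero, smul_eq_mul, mul_ite, mul_one,
      mul_zero]
  have hM_fix : ∀ i : Fin n, M i i = X := by
    intro i
    rw [hMe, if_pos rfl, if_neg, sub_zero]
    rintro (h | h) <;> exact fin_add_one_ne hn i h.symm
  have hM_up : ∀ i : Fin n, M (i + 1) i = -1 := by
    intro i
    rw [hMe, if_neg (fin_add_one_ne hn i), if_pos (Or.inl rfl), zero_sub]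
  have hM_down : ∀ i : Fin n, M (i - 1) i = -1 := by
    intro i
    rw [hMe, if_neg (fin_sub_one_ne hn i), if_pos (Or.inr (sub_add_cancel i 1).symm), zero_sub]
  have hM_zero : ∀ j i : Fin n, j ≠ i → j ≠ i + 1 → j ≠ i - 1 → M j i = 0 := by
    intro j i h1 h2 h3
    rw [hMe, if_neg h1, if_neg, sub_zero]
    rintro (h | h)
    · exact h2 h
    · exact h3 (by rw [h, add_sub_cancel_right])
  have hN_fix : ∀ i : Fin n, N i i = X := by
    intro i
    rw [hNe, if_pos rfl, if_neg (fun h => fin_add_one_ne hn i h.symm),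
      if_neg (fun h => fin_add_one_ne hn i h.symm), add_zero, sub_zero]
  have hN_up : ∀ i : Fin n, N (i + 1) i = -C d := by
    intro i
    rw [hNe, if_neg (fin_add_one_ne hn i), if_neg (fun h => fin_two_step_ne hn i h.symm),
      if_pos rfl, zero_add, zero_sub]
  have hN_down : ∀ i : Fin n, N (i - 1) i = -C c := by
    intro i
    rw [hNe, if_neg (fin_sub_one_ne hn i), if_pos (sub_add_cancel i 1).symm,
      if_neg (fun h => fin_add_one_ne_sub_one hn i h.symm), add_zero, zero_sub]
  have hN_zero : ∀ j i : Fin n, j ≠ i → j ≠ i + 1 → j ≠ i - 1 → N j i = 0 := by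
    intro j i h1 h2 h3
    rw [hNe, if_neg h1, if_neg (fun h => h3 (by rw [h, add_sub_cancel_right])),
      if_neg h2, add_zero, sub_zero]
  -- the two cyclic shifts
  set τ : Equiv.Perm (Fin n) := Equiv.addRight (1 : Fin n) with hτdef
  have hτ : ∀ x, τ x = x + 1 := fun x => rfl
  have hτ' : ∀ x, τ⁻¹ x = x - 1 := by
    intro x
    have h1 : τ (x - 1) = x := by rw [hτ, sub_add_cancel]
    have h2 := Equiv.Perm.inv_apply_self τ (x - 1)
    rw [h1] at h2; exact h2
  have hττ : τ ≠ τ⁻¹ := by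
    intro h
    have h2 : τ (τ 0) = (0 : Fin n) := by
      nth_rewrite 2 [h]
      exact Equiv.Perm.apply_inv_self τ 0
    rw [hτ, hτ] at h2
    exact fin_two_step_ne hn 0 h2
  have hsign_τ : Equiv.Perm.sign τ = 1 := sign_addRight_one hn hodd
  have hsign_τ' : Equiv.Perm.sign τ⁻¹ = 1 := by
    rw [map_inv, hsign_τ]; rfl
  -- key pointwise identity for non-shift permutations
  have key : ∀ σ : Equiv.Perm (Fin n), σ ≠ τ → σ ≠ τ⁻¹ →
      (∏ i, M (σ i) i) = ((Equiv.Perm.sign σ : ℤ) : ℂ[X]) * ∏ i, N (σ i) i := by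
    intro σ hτ1 hτ2
    by_cases hg : IsGood σ
    · rcases struct hn σ hg with hinv | hup | hdown
      · -- involution case
        set P := univ.filter (fun i : Fin n => σ i = i + 1) with hP
        set Q := univ.filter (fun i : Fin n => σ i = i - 1) with hQ
        have hdown_iff : ∀ i : Fin n, (¬ σ i = i ∧ ¬ σ i = i + 1) ↔ σ i = i - 1 := by
          intro i
          constructor
          · rintro ⟨a, b⟩
            rcases hg i with h | h | h
            · exact absurd h a
            · exact absurd h b
            · exact h
          · intro h
            refine ⟨fun h' => fin_sub_one_ne hn i ?_, fun h' => fin_add_one_ne_sub_one hn i ?_⟩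
            · rw [← h, h']
            · rw [← h, h']
        have hQP : Q.card = P.card := by
          apply Finset.card_bij (fun j _ => σ j)
          · intro a ha
            simp only [hQ, Finset.mem_filter, Finset.mem_univ, true_and] at ha
            simp only [hP, Finset.mem_filter, Finset.mem_univ, true_and]
            rw [hinv a, ha, sub_add_cancel]
          · intro a _ b _ hab
            exact σ.injective hab
          · intro b hb
            simp only [hP, Finset.mem_filter, Finset.mem_univ, true_and] at hb
            refine ⟨σ b, ?_, hinv b⟩
            simp only [hQ, Finset.mem_filter, Finset.mem_univ, true_and]
            rw [hinv b, hb, add_sub_cancel_right]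
        have hprodM : (∏ i, M (σ i) i) =
            (∏ i ∈ univ.filter (fun i : Fin n => σ i = i), (X : ℂ[X])) *
              ∏ _i ∈ univ.filter (fun i : Fin n => ¬ σ i = i), (-1 : ℂ[X]) := by
          rw [← Finset.prod_ite]
          apply Finset.prod_congr rfl
          intro i _
          by_cases h : σ i = i
          · rw [if_pos h, h, hM_fix]
          · rw [if_neg h]
            rcases hg i with h' | h' | h'
            · exact absurd h' h
            · rw [h', hM_up]
            · rw [h', hM_down]
        have hprodN : (∏ i, N (σ i) i) =
            (∏ i ∈ univ.filter (fun i : Fin n => σ i = i), (X : ℂ[X])) *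
              ((-C d) ^ P.card * (-C c) ^ Q.card) := by
          have step1 : (∏ i, N (σ i) i) =
              ∏ i, (if σ i = i then (X : ℂ[X]) else if σ i = i + 1 then -C d else -C c) := by
            apply Finset.prod_congr rfl
            intro i _
            by_cases h : σ i = i
            · rw [if_pos h, h, hN_fix]
            · rw [if_neg h]
              by_cases h2 : σ i = i + 1
              · rw [if_pos h2, h2, hN_up]
              · rw [if_neg h2]
                have h3 : σ i = i - 1 := (hdown_iff i).mp ⟨h, h2⟩
                rw [h3, hN_down]
          rw [step1, Finset.prod_ite, Finset.prod_ite]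
          congr 1
          · rw [Finset.filter_filter, Finset.filter_filter]
            have e1 : univ.filter (fun i : Fin n => ¬ σ i = i ∧ σ i = i + 1) = P := by
              ext i
              simp only [hP, Finset.mem_filter, Finset.mem_univ, true_and, and_iff_right_iff_imp]
              intro h h'
              exact fin_add_one_ne hn i (h' ▸ h).symm
            have e2 : univ.filter (fun i : Fin n => ¬ σ i = i ∧ ¬ σ i = i + 1) = Q := by
              ext i
              simp only [hP, hQ, Finset.mem_filter, Finset.mem_univ, true_and]
              exact hdown_iff i
            rw [e1, e2, Finset.prod_const, Finset.prod_const]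
        have hcardsplit : (univ.filter (fun i : Fin n => ¬ σ i = i)).card = P.card + Q.card := by
          have hu : univ.filter (fun i : Fin n => ¬ σ i = i) = P ∪ Q := by
            ext i
            simp only [Finset.mem_filter, Finset.mem_univ, true_and, Finset.mem_union, hP, hQ]
            constructor
            · intro h
              rcases hg i with h' | h' | h'
              · exact absurd h' h
              · exact Or.inl h'
              · exact Or.inr h'
            · rintro (h | h)
              · rw [h]; exact fin_add_one_ne hn i
              · rw [h]; exact fin_sub_one_ne hn i
          rw [hu, Finset.card_union_of_disjoint]
          rw [Finset.disjoint_left]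
          intro a haP haQ
          simp only [hP, Finset.mem_filter, Finset.mem_univ, true_and] at haP
          simp only [hQ, Finset.mem_filter, Finset.mem_univ, true_and] at haQ
          exact fin_add_one_ne_sub_one hn a (haP ▸ haQ)
        have hsigncast : ((Equiv.Perm.sign σ : ℤ) : ℂ[X]) = (-1) ^ P.card := by
          rw [sign_good_involution hn P.card σ hg hinv rfl]
          push_cast
          rfl
        have hcd' : (-C d) * (-C c) = -1 := by
          rw [neg_mul_neg, ← C_mul, show d * c = -1 by rw [mul_comm]; exact hcd]
          simp
        rw [hprodM, hprodN, hsigncast, Finset.prod_const, Finset.prod_const, hcardsplit, hQP]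
        rw [show (-C d) ^ P.card * (-C c) ^ P.card = ((-C d) * (-C c)) ^ P.card from
          (mul_pow _ _ _).symm, hcd', pow_add]
        ring
      · exact absurd (Equiv.ext fun x => (hup x).trans (hτ x).symm) hτ1
      · exact absurd (Equiv.ext fun x => (hdown x).trans (hτ' x).symm) hτ2
    · rw [IsGood] at hg
      push_neg at hg
      obtain ⟨i, h1, h2, h3⟩ := hg
      have hz1 : (∏ x, M (σ x) x) = 0 :=
        Finset.prod_eq_zero (Finset.mem_univ i) (hM_zero _ _ h1 h2 h3)
      have hz2 : (∏ x, N (σ x) x) = 0 :=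
        Finset.prod_eq_zero (Finset.mem_univ i) (hN_zero _ _ h1 h2 h3)
      rw [hz1, hz2, mul_zero]
  -- reduce to the two shifts
  have hper : M.permanent = ∑ σ : Equiv.Perm (Fin n), ∏ i, M (σ i) i := rfl
  rw [hper, Matrix.det_apply', ← sub_eq_zero, ← Finset.sum_sub_distrib]
  have htotal : ∀ f : Equiv.Perm (Fin n) → ℂ[X], (∀ σ, σ ≠ τ → σ ≠ τ⁻¹ → f σ = 0) →
      ∑ σ : Equiv.Perm (Fin n), f σ = f τ + f τ⁻¹ := by
    intro f hf
    rw [← Finset.sum_pair hττ]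
    refine (Finset.sum_subset (Finset.subset_univ _) ?_).symm
    intro x _ hx
    simp only [Finset.mem_insert, Finset.mem_singleton] at hx
    push_neg at hx
    exact hf x hx.1 hx.2
  refine (htotal _ ?_).trans ?_
  · intro σ h1 h2
    rw [key σ h1 h2, sub_self]
  · have hpτ : (∏ i, M (τ i) i) = -1 := by
      have : (∏ i, M (τ i) i) = ∏ _i : Fin n, (-1 : ℂ[X]) :=
        Finset.prod_congr rfl (fun i _ => by rw [hτ, hM_up])
      rw [this, Finset.prod_const, Finset.card_univ, Fintype.card_fin, Odd.neg_one_pow hodd]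
    have hpτ' : (∏ i, M (τ⁻¹ i) i) = -1 := by
      have : (∏ i, M (τ⁻¹ i) i) = ∏ _i : Fin n, (-1 : ℂ[X]) :=
        Finset.prod_congr rfl (fun i _ => by rw [hτ', hM_down])
      rw [this, Finset.prod_const, Finset.card_univ, Fintype.card_fin, Odd.neg_one_pow hodd]
    have hqτ : (∏ i, N (τ i) i) = -C (d ^ n) := by
      have : (∏ i, N (τ i) i) = ∏ _i : Fin n, (-C d : ℂ[X]) :=
        Finset.prod_congr rfl (fun i _ => by rw [hτ, hN_up])
      rw [this, Finset.prod_const, Finset.card_univ, Fintype.card_fin, Odd.neg_pow hodd,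
        ← map_pow]
    have hqτ' : (∏ i, N (τ⁻¹ i) i) = -C (c ^ n) := by
      have : (∏ i, N (τ⁻¹ i) i) = ∏ _i : Fin n, (-C c : ℂ[X]) :=
        Finset.prod_congr rfl (fun i _ => by rw [hτ', hN_down])
      rw [this, Finset.prod_const, Finset.card_univ, Fintype.card_fin, Odd.neg_pow hodd,
        ← map_pow]
    rw [hpτ, hpτ', hqτ, hqτ', hsign_τ, hsign_τ']
    have hC2 : C (c ^ n) + C (d ^ n) = 2 := by
      rw [← map_add, hsum, map_ofNat]
    push_cast
    linear_combination hC2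

end main



lemma det_fact (hn : 3 ≤ n) (u : ℂ) :
    det ((X : ℂ[X]) • (1 : Matrix (Fin n) (Fin n) ℂ[X]) -
        (cycB n (Complex.exp (u / n)) (-Complex.exp (-u / n))).map C) =
      ∏ k : Fin n, ((X : ℂ[X]) -
        C (2 * Complex.sinh ((u + 2 * (Real.pi : ℂ) * Complex.I * ((k : ℕ) : ℂ)) / n))) := by
  have hn0 : (n : ℂ) ≠ 0 := Nat.cast_ne_zero.mpr (by omega)
  set c : ℂ := Complex.exp (u / n) with hc
  set d : ℂ := -Complex.exp (-u / n) with hd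
  set μ : Fin n → ℂ := fun k =>
    2 * Complex.sinh ((u + 2 * (Real.pi : ℂ) * Complex.I * ((k : ℕ) : ℂ)) / n) with hμdef
  set ζ : ℂ := Complex.exp (2 * (Real.pi : ℂ) * Complex.I / n) with hζdef
  have hζn : ζ ^ n = 1 := by
    rw [hζdef, ← Complex.exp_nat_mul, mul_div_cancel₀ _ hn0, Complex.exp_two_pi_mul_I]
  have hmod : ∀ x y : ℕ, x % n = y % n → ζ ^ x = ζ ^ y := by
    have key : ∀ x : ℕ, ζ ^ x = ζ ^ (x % n) := by
      intro x
      conv_lhs => rw [← Nat.div_add_mod x n]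
      rw [pow_add, pow_mul, hζn, one_pow, one_mul]
    intro x y h
    rw [key x, key y, h]
  set F : Matrix (Fin n) (Fin n) ℂ := Matrix.of fun j k : Fin n => ζ ^ ((j : ℕ) * (k : ℕ))
    with hF
  -- μ in terms of ζ
  have hζk : ∀ k : Fin n, ζ ^ (k : ℕ) =
      Complex.exp (2 * (Real.pi : ℂ) * Complex.I * ((k : ℕ) : ℂ) / n) := by
    intro k
    rw [hζdef, ← Complex.exp_nat_mul]
    ring_nf
  have hζk' : ∀ k : Fin n, ζ ^ ((n - 1) * (k : ℕ)) =
      Complex.exp (-(2 * (Real.pi : ℂ) * Complex.I * ((k : ℕ) : ℂ) / n)) := by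
    intro k
    rw [hζdef, ← Complex.exp_nat_mul]
    have hcast : (((n - 1) * (k : ℕ) : ℕ) : ℂ) = ((n : ℂ) - 1) * ((k : ℕ) : ℂ) := by
      push_cast [Nat.cast_sub (show 1 ≤ n by omega)]
      ring
    rw [hcast]
    have harg : ((n : ℂ) - 1) * ((k : ℕ) : ℂ) * (2 * (Real.pi : ℂ) * Complex.I / n) =
        ((k : ℕ) : ℂ) * (2 * Real.pi * Complex.I) +
          -(2 * (Real.pi : ℂ) * Complex.I * ((k : ℕ) : ℂ) / n) := by
      field_simp
      ring
    rw [harg, Complex.exp_add, Complex.exp_nat_mul_two_pi_mul_I, one_mul]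
  have hμ : ∀ k : Fin n, μ k = c * ζ ^ (k : ℕ) + d * ζ ^ ((n - 1) * (k : ℕ)) := by
    intro k
    rw [hμdef]
    simp only
    rw [Complex.two_sinh, hζk, hζk', hc, hd, ← Complex.exp_add, neg_mul,
      ← Complex.exp_add]
    congr 2
    · field_simp
    · field_simp
      ring
  -- eigen-equation
  have hBF : cycB n c d * F = F * Matrix.diagonal μ := by
    ext j k
    rw [Matrix.mul_apply, Matrix.mul_diagonal]
    have hcond : ∀ m : Fin n, (j = m + 1) = (m = j - 1) := fun m =>
      propext ⟨fun h => by rw [h, add_sub_cancel_right], fun h => by rw [h, sub_add_cancel]⟩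
    simp only [cycB, hF, Matrix.of_apply, add_mul, ite_mul, zero_mul, hcond]
    rw [Finset.sum_add_distrib, Finset.sum_ite_eq' univ (j + 1), Finset.sum_ite_eq' univ (j - 1)]
    simp only [Finset.mem_univ, if_true]
    -- exponent rewrites
    have hone : Nat.ModEq n (1 % n) 1 := Nat.mod_mod_of_dvd 1 dvd_rfl
    have hv1 : ζ ^ (((j + 1 : Fin n) : ℕ) * (k : ℕ)) = ζ ^ (((j : ℕ) + 1) * (k : ℕ)) := by
      apply hmod
      refine Nat.ModEq.mul_right _ ?_
      show Nat.ModEq n ((j + 1 : Fin n) : ℕ) ((j : ℕ) + 1)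
      have : ((j + 1 : Fin n) : ℕ) = ((j : ℕ) + 1 % n) % n := by
        rw [Fin.val_add, Fin.val_one']
      rw [this]
      calc Nat.ModEq n (((j : ℕ) + 1 % n) % n) ((j : ℕ) + 1 % n) :=
            (Nat.mod_mod_of_dvd _ dvd_rfl : _)
        _ ≡ (j : ℕ) + 1 [MOD n] := Nat.ModEq.add_left _ hone
    have hsac : ((j - 1 : Fin n) + 1) = j := sub_add_cancel j 1
    have e1 : Nat.ModEq n (((j - 1 : Fin n) : ℕ) + 1) ((j : ℕ)) := by
      have hval := congrArg Fin.val hsac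
      rw [Fin.val_add, Fin.val_one'] at hval
      calc Nat.ModEq n (((j - 1 : Fin n) : ℕ) + 1) (((j - 1 : Fin n) : ℕ) + 1 % n) :=
            Nat.ModEq.add_left _ hone.symm
        _ ≡ (j : ℕ) [MOD n] := by
            show (((j - 1 : Fin n) : ℕ) + 1 % n) % n = (j : ℕ) % n
            rw [hval, Nat.mod_eq_of_lt j.isLt]
    have hv2 : ζ ^ (((j - 1 : Fin n) : ℕ) * (k : ℕ)) = ζ ^ (((j : ℕ) + (n - 1)) * (k : ℕ)) := by
      apply hmod
      refine Nat.ModEq.mul_right _ ?_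
      have e3 : Nat.ModEq n ((j : ℕ) + (n - 1)) ((((j - 1 : Fin n) : ℕ) + 1) + (n - 1)) :=
        Nat.ModEq.add_right _ e1.symm
      have e4 : (((j - 1 : Fin n) : ℕ) + 1) + (n - 1) = ((j - 1 : Fin n) : ℕ) + n := by omega
      have e5 : Nat.ModEq n (((j - 1 : Fin n) : ℕ) + n) (((j - 1 : Fin n) : ℕ)) :=
        Nat.add_mod_right _ _
      exact (e3.trans (e4 ▸ e5)).symm
    rw [hv1, hv2, hμ k, Nat.add_mul, Nat.add_mul, Nat.one_mul, pow_add, pow_add]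
    ring
  -- invertibility of F
  have hdetF : det F ≠ 0 := by
    have hFv : F = Matrix.vandermonde (fun i : Fin n => ζ ^ (i : ℕ)) := by
      ext i j
      rw [hF, Matrix.of_apply, Matrix.vandermonde_apply, ← pow_mul]
    rw [hFv]
    rw [Matrix.det_vandermonde_ne_zero_iff]
    intro i j hij
    have hprim : IsPrimitiveRoot ζ n := Complex.isPrimitiveRoot_exp n (by omega)
    exact Fin.ext (hprim.pow_inj i.isLt j.isLt hij)
  -- lift to ℂ[X] and cancel
  have hpoly : ((X : ℂ[X]) • (1 : Matrix (Fin n) (Fin n) ℂ[X]) - (cycB n c d).map C) *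
      F.map C = F.map C *
        ((X : ℂ[X]) • (1 : Matrix (Fin n) (Fin n) ℂ[X]) - (Matrix.diagonal μ).map C) := by
    have h1 : (cycB n c d).map C * F.map C = F.map C * (Matrix.diagonal μ).map C := by
      rw [← Matrix.map_mul, ← Matrix.map_mul, hBF]
    rw [sub_mul, mul_sub, h1]
    congr 1
    rw [smul_mul_assoc, one_mul, mul_smul_comm, mul_one]
  have hdet := congrArg det hpoly
  rw [det_mul, det_mul] at hdet
  have hFC : det (F.map C) = C (det F) := (RingHom.map_det C F).symm
  have hCne : det (F.map C) ≠ 0 := by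
    rw [hFC]
    simpa using hdetF
  have hcancel : det ((X : ℂ[X]) • (1 : Matrix (Fin n) (Fin n) ℂ[X]) - (cycB n c d).map C) =
      det ((X : ℂ[X]) • (1 : Matrix (Fin n) (Fin n) ℂ[X]) - (Matrix.diagonal μ).map C) := by
    apply mul_right_cancel₀ hCne
    rw [hdet]; ring
  rw [hcancel]
  have hdiag : (X : ℂ[X]) • (1 : Matrix (Fin n) (Fin n) ℂ[X]) - (Matrix.diagonal μ).map C =
      Matrix.diagonal (fun k => (X : ℂ[X]) - C (μ k)) := by
    rw [Matrix.smul_one_eq_diagonal, Matrix.diagonal_map (map_zero C), ← Matrix.diagonal_sub]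
  rw [hdiag, Matrix.det_diagonal]


end Aux

/-- **Permanental roots of odd cycles.** For odd `n ≥ 3`, with `a := log(1+√2)`, the
multiset of roots of `π(C_n,x)` is `{ 2·sinh((a + 2πik)/n) : k = 0, …, n−1 }`. -/
theorem permanental_roots_odd_cycle {n : ℕ} (hn : 3 ≤ n) (hodd : Odd n) :
    (graphPermPoly (SimpleGraph.cycleGraph n)).roots =
      Multiset.map
        (fun k : Fin n =>
          2 * Complex.sinh
            (((Real.log (1 + Real.sqrt 2) : ℂ) +
              2 * (Real.pi : ℂ) * Complex.I * ((k : ℕ) : ℂ)) / (n : ℂ)))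
        (Finset.univ : Finset (Fin n)).val := by
  haveI : NeZero n := ⟨by omega⟩
  have hn0 : (n : ℂ) ≠ 0 := Nat.cast_ne_zero.mpr (by omega)
  set a : ℂ := (Real.log (1 + Real.sqrt 2) : ℂ) with ha
  set c : ℂ := Complex.exp (a / n) with hc
  set d : ℂ := -Complex.exp (-a / n) with hd
  have hcd : c * d = -1 := by
    rw [hc, hd, mul_neg, ← Complex.exp_add]
    have : a / n + -a / n = 0 := by ring
    rw [this, Complex.exp_zero]
  have hsumR : Real.exp (Real.log (1 + Real.sqrt 2)) -
      Real.exp (-(Real.log (1 + Real.sqrt 2))) = 2 := by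
    have hpos : (0 : ℝ) < 1 + Real.sqrt 2 := by positivity
    have hxa : Real.exp (Real.log (1 + Real.sqrt 2)) = 1 + Real.sqrt 2 := Real.exp_log hpos
    have hs2 : Real.sqrt 2 ^ 2 = 2 := Real.sq_sqrt (by norm_num)
    rw [Real.exp_neg, hxa]
    field_simp
    nlinarith [hs2, Real.sqrt_nonneg 2]
  have hsum : c ^ n + d ^ n = 2 := by
    rw [hc, hd, Odd.neg_pow hodd, ← Complex.exp_nat_mul, ← Complex.exp_nat_mul,
      mul_div_cancel₀ _ hn0, mul_div_cancel₀ _ hn0]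
    have h1 : Complex.exp a = ((Real.exp (Real.log (1 + Real.sqrt 2)) : ℝ) : ℂ) := by
      rw [Complex.ofReal_exp, ha]
    have h2 : Complex.exp (-a) = ((Real.exp (-(Real.log (1 + Real.sqrt 2))) : ℝ) : ℂ) := by
      rw [Complex.ofReal_exp, ha]; norm_cast
    rw [h1, h2]
    norm_cast
  have hA : ∀ i j, ((SimpleGraph.cycleGraph n).adjMatrix ℂ) i j =
      if (SimpleGraph.cycleGraph n).Adj i j then 1 else 0 := by
    intro i j
    rw [SimpleGraph.adjMatrix_apply]
  have h1 : graphPermPoly (SimpleGraph.cycleGraph n) =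
      ∏ k : Fin n, ((X : ℂ[X]) -
        C (2 * Complex.sinh ((a + 2 * (Real.pi : ℂ) * Complex.I * ((k : ℕ) : ℂ)) / n))) := by
    unfold graphPermPoly permPoly
    refine Eq.trans (per_eq_det hn hodd hcd hsum _ (fun i j => ?_)) (det_fact hn a)
    by_cases h : (SimpleGraph.cycleGraph n).Adj i j <;>
      simp [SimpleGraph.adjMatrix_apply, h]
  rw [h1]
  have h2 : (∏ k : Fin n, ((X : ℂ[X]) -
      C (2 * Complex.sinh ((a + 2 * (Real.pi : ℂ) * Complex.I * ((k : ℕ) : ℂ)) / n)))) =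
      ((Finset.univ.val.map (fun k : Fin n =>
        2 * Complex.sinh ((a + 2 * (Real.pi : ℂ) * Complex.I * ((k : ℕ) : ℂ)) / n))).map
          (fun z : ℂ => (X : ℂ[X]) - C z)).prod := by
    rw [Multiset.map_map]
    rfl
  rw [h2, Polynomial.roots_multiset_prod_X_sub_C]
end

section
/- For every n ≥ 1, E_per(K_n) ≥ n · D_n^{1/n}, where D_n is the number of derangements of {1, …, n}. -/
open Polynomial Matrix

lemma top_permPoly (n : ℕ) :
    graphPermPoly (⊤ : SimpleGraph (Fin n)) =
      ∑ σ : Equiv.Perm (Fin n), ∏ i, (if σ i = i then (X : ℂ[X]) else -1) := by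
  unfold graphPermPoly permPoly Matrix.permanent
  refine Finset.sum_congr rfl fun σ _ => Finset.prod_congr rfl fun i _ => ?_
  by_cases h : σ i = i <;>
    simp [Matrix.sub_apply, Matrix.smul_apply, Matrix.one_apply, h, eq_comm]

lemma prod_ite_perm {n : ℕ} (σ : Equiv.Perm (Fin n)) :
    (∏ i, (if σ i = i then (X : ℂ[X]) else -1)) =
      X ^ (Finset.univ.filter (fun i => σ i = i)).card *
        (-1) ^ (Finset.univ.filter (fun i => ¬ σ i = i)).card := by
  rw [Finset.prod_ite]
  simp [Finset.prod_const]

open scoped Classical in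
lemma coeff_n {n : ℕ} (σ : Equiv.Perm (Fin n)) :
    (∏ i, (if σ i = i then (X : ℂ[X]) else -1)).coeff n = if σ = 1 then 1 else 0 := by
  rw [prod_ite_perm]
  by_cases h : σ = 1
  · subst h
    simp [Finset.filter_true_of_mem, coeff_X_pow]
  · have hk : (Finset.univ.filter (fun i => σ i = i)).card < n := by
      obtain ⟨x, hx⟩ := not_forall.mp (fun hh => h (Equiv.ext hh))
      calc (Finset.univ.filter (fun i => σ i = i)).card
          ≤ (Finset.univ.erase x).card := by
            apply Finset.card_le_card
            intro y hy
            simp only [Finset.mem_filter, Finset.mem_univ, true_and] at hy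
            exact Finset.mem_erase.mpr ⟨fun hxy => hx (hxy ▸ hy), Finset.mem_univ y⟩
        _ < n := by
            have : 0 < n := Fin.pos_iff_nonempty.mpr ⟨x⟩
            simp [Finset.card_erase_of_mem, Finset.card_univ, Nat.sub_lt, this]
    rw [if_neg h, mul_comm, show ((-1 : ℂ[X]) ^ (Finset.univ.filter (fun i => ¬ σ i = i)).card)
        = C ((-1 : ℂ) ^ (Finset.univ.filter (fun i => ¬ σ i = i)).card) by simp,
      coeff_C_mul, coeff_X_pow, if_neg hk.ne', mul_zero]

open scoped Classical in
lemma coeff_zero' {n : ℕ} (σ : Equiv.Perm (Fin n)) :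
    (∏ i, (if σ i = i then (X : ℂ[X]) else -1)).coeff 0 =
      (-1 : ℂ) ^ n * (if σ ∈ derangements (Fin n) then 1 else 0) := by
  rw [prod_ite_perm]
  by_cases h : σ ∈ derangements (Fin n)
  · have h1 : (Finset.univ.filter (fun i => σ i = i)) = ∅ := by
      ext i; simpa using h i
    have h2 : (Finset.univ.filter (fun i : Fin n => ¬ σ i = i)) = Finset.univ := by
      ext i; simpa using h i
    rw [h1, h2, if_pos h, Finset.card_empty, Finset.card_univ, Fintype.card_fin, pow_zero,
      one_mul, mul_one, show ((-1 : ℂ[X]) ^ n) = C ((-1 : ℂ) ^ n) by simp, coeff_C, if_pos rfl]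
  · obtain ⟨x, hx⟩ : ∃ x, σ x = x := by
      simpa [derangements, not_forall] using h
    have hx' : x ∈ Finset.univ.filter (fun i => σ i = i) := by simp [hx]
    have hk : 0 < (Finset.univ.filter (fun i => σ i = i)).card := Finset.card_pos.mpr ⟨x, hx'⟩
    rw [if_neg h, mul_comm (X ^ _), show ((-1 : ℂ[X]) ^ (Finset.univ.filter (fun i => ¬ σ i = i)).card)
        = C ((-1 : ℂ) ^ (Finset.univ.filter (fun i => ¬ σ i = i)).card) by simp,
      coeff_C_mul, coeff_X_pow, if_neg (by omega : ¬ (0 : ℕ) = (Finset.univ.filter (fun i => σ i = i)).card)]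
    ring

lemma natDegree_term_le {n : ℕ} (σ : Equiv.Perm (Fin n)) :
    (∏ i, (if σ i = i then (X : ℂ[X]) else -1)).natDegree ≤ n := by
  rw [prod_ite_perm]
  apply le_trans (natDegree_mul_le)
  have h1 : ((X : ℂ[X]) ^ (Finset.univ.filter (fun i => σ i = i)).card).natDegree ≤ n := by
    simp only [natDegree_X_pow]
    exact le_trans (Finset.card_filter_le _ _) (by simp)
  have h2 : ((-1 : ℂ[X]) ^ (Finset.univ.filter (fun i => ¬ σ i = i)).card).natDegree = 0 := by
    rw [show ((-1 : ℂ[X]) ^ (Finset.univ.filter (fun i => ¬ σ i = i)).card)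
        = C ((-1 : ℂ) ^ (Finset.univ.filter (fun i => ¬ σ i = i)).card) by simp, natDegree_C]
  omega

lemma coeff_top_n (n : ℕ) : (graphPermPoly (⊤ : SimpleGraph (Fin n))).coeff n = 1 := by
  rw [top_permPoly, finset_sum_coeff]
  rw [Finset.sum_congr rfl (fun σ _ => coeff_n σ), Finset.sum_ite_eq' Finset.univ (1 : Equiv.Perm (Fin n)) (fun _ => (1:ℂ))]
  rw [if_pos (Finset.mem_univ _)]

lemma natDegree_top (n : ℕ) : (graphPermPoly (⊤ : SimpleGraph (Fin n))).natDegree = n := by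
  refine le_antisymm ?_ (le_natDegree_of_ne_zero (by rw [coeff_top_n]; exact one_ne_zero))
  rw [top_permPoly]
  exact le_trans (natDegree_sum_le _ _) (by
    exact (Finset.fold_max_le n).mpr ⟨Nat.zero_le n, fun σ _ => natDegree_term_le σ⟩)

lemma monic_top (n : ℕ) : (graphPermPoly (⊤ : SimpleGraph (Fin n))).Monic := by
  unfold Polynomial.Monic Polynomial.leadingCoeff
  rw [natDegree_top, coeff_top_n]

open scoped Classical in
lemma coeff_top_zero (n : ℕ) :
    (graphPermPoly (⊤ : SimpleGraph (Fin n))).coeff 0 = (-1) ^ n * (numDerangements n : ℂ) := by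
  rw [top_permPoly, finset_sum_coeff, Finset.sum_congr rfl (fun σ _ => coeff_zero' σ),
    ← Finset.mul_sum, Finset.sum_boole]
  congr 1
  rw [← card_derangements_fin_eq_numDerangements]
  rw [Fintype.card_eq_nat_card, Nat.card_eq_card_toFinset]
  norm_cast
  congr 1
  ext σ
  simp only [Finset.mem_filter, Finset.mem_univ, true_and, Set.mem_toFinset]

set_option maxHeartbeats 1000000 in
lemma roots_card_top (n : ℕ) :
    (graphPermPoly (⊤ : SimpleGraph (Fin n))).roots.card = n := by
  have h : Polynomial.Splits (graphPermPoly (⊤ : SimpleGraph (Fin n))) :=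
    IsAlgClosed.splits _
  exact (Polynomial.splits_iff_card_roots.mp h).trans (natDegree_top n)

lemma abs_prod_roots_top (n : ℕ) :
    ((graphPermPoly (⊤ : SimpleGraph (Fin n))).roots.map (fun z : ℂ => ‖z‖)).prod
      = (numDerangements n : ℝ) := by
  have hmon := monic_top n
  have hcard : (graphPermPoly (⊤ : SimpleGraph (Fin n))).roots.card
      = (graphPermPoly (⊤ : SimpleGraph (Fin n))).natDegree := by
    rw [roots_card_top, natDegree_top]
  have hprod := prod_multiset_X_sub_C_of_monic_of_roots_card_eq hmon hcard
  have heval : (graphPermPoly (⊤ : SimpleGraph (Fin n))).eval 0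
      = (((graphPermPoly (⊤ : SimpleGraph (Fin n))).roots.map fun a => -a)).prod := by
    conv_lhs => rw [← hprod]
    rw [eval_multiset_prod, Multiset.map_map]
    refine congrArg _ (Multiset.map_congr rfl fun a _ => ?_)
    simp
  have habs : ‖((graphPermPoly (⊤ : SimpleGraph (Fin n))).eval 0)‖
      = (((graphPermPoly (⊤ : SimpleGraph (Fin n))).roots.map (fun z : ℂ => ‖z‖))).prod := by
    rw [heval, ← normHom_apply, map_multiset_prod, Multiset.map_map]
    refine congrArg _ (Multiset.map_congr rfl fun a _ => ?_)
    simp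
  rw [← habs, ← coeff_zero_eq_eval_zero, coeff_top_zero]
  rw [norm_mul, norm_pow]
  simp [Complex.norm_natCast]

lemma amgm_multiset {n : ℕ} (hn : 1 ≤ n) (s : Multiset ℝ) (hcard : s.card = n)
    (hpos : ∀ x ∈ s, 0 ≤ x) :
    (n : ℝ) * s.prod ^ ((n : ℝ)⁻¹) ≤ s.sum := by
  obtain ⟨l, rfl⟩ : ∃ l : List ℝ, (l : Multiset ℝ) = s := ⟨s.toList, Multiset.coe_toList s⟩
  have hlen : l.length = n := by simpa using hcard
  subst hlen
  have hn0 : (l.length : ℝ) ≠ 0 := Nat.cast_ne_zero.mpr (by omega)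
  set z : Fin l.length → ℝ := fun i => l.get i with hz
  have hznn : ∀ i ∈ Finset.univ, (0:ℝ) ≤ z i := fun i _ =>
    hpos _ (by simp [hz])
  have hsum : ∑ i, z i = l.sum := by
    simpa [hz] using Fin.sum_univ_get l
  have hprodz : ∏ i, z i = l.prod := by
    simpa [hz] using Fin.prod_univ_get l
  have key := Real.geom_mean_le_arith_mean_weighted Finset.univ
    (fun _ => (l.length : ℝ)⁻¹) z (fun _ _ => by positivity)
    (by simp [Finset.card_univ, hn0]) hznn
  rw [← Finset.mul_sum] at key
  have hcoe_prod : (↑l : Multiset ℝ).prod = l.prod := by simp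
  have hcoe_sum : (↑l : Multiset ℝ).sum = l.sum := by simp
  rw [hcoe_prod, hcoe_sum, ← hsum, ← hprodz]
  calc (l.length : ℝ) * (∏ i, z i) ^ ((l.length : ℝ)⁻¹)
      = (l.length : ℝ) * ∏ i, z i ^ ((l.length : ℝ)⁻¹) := by
        rw [← Real.finset_prod_rpow _ _ hznn]
    _ ≤ (l.length : ℝ) * ((l.length : ℝ)⁻¹ * ∑ i, z i) :=
        mul_le_mul_of_nonneg_left key (by positivity)
    _ = ∑ i, z i := by field_simp

/-- For every `n ≥ 1`, `E_per(K_n) ≥ n·D_n^{1/n}`, where `D_n` is the number of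
derangements of `{1, …, n}`. -/
theorem perEnergy_top_ge {n : ℕ} (hn : 1 ≤ n) :
    perEnergy (⊤ : SimpleGraph (Fin n)) ≥
      (n : ℝ) * (numDerangements n : ℝ) ^ ((n : ℝ)⁻¹) := by
  have hcard : ((graphPermPoly (⊤ : SimpleGraph (Fin n))).roots.map (fun z : ℂ => ‖z‖)).card = n := by
    rw [Multiset.card_map, roots_card_top]
  have hpos : ∀ x ∈ (graphPermPoly (⊤ : SimpleGraph (Fin n))).roots.map (fun z : ℂ => ‖z‖), (0:ℝ) ≤ x := by
    intro x hx
    obtain ⟨a, _, rfl⟩ := Multiset.mem_map.mp hx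
    exact norm_nonneg _
  have := amgm_multiset hn _ hcard hpos
  rw [abs_prod_roots_top] at this
  exact this
end
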